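/- Let p be a prime number, a an integer, and b a natural number. Then for every integer m, C(a·(p·m), p·b) is congruent to C(a·m, b) modulo p. -/

import Mathlib

open Finset in
lemma choose_add_pow_cast (p : ℕ) (hp : p.Prime) (n : ℤ) (k N : ℕ) (hk : k < p ^ N) :
    ((Ring.choose (n + (p : ℤ) ^ N) k : ℤ) : ZMod p) = ((Ring.choose n k : ℤ) : ZMod p) := by
  rw [Ring.add_choose_eq k (Commute.all _ _)]
  have : ∀ ij ∈ antidiagonal k,
      ((Ring.choose n ij.1 * Ring.choose ((p : ℤ) ^ N) ij.2 : ℤ) : ZMod p)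
        = if ij.2 = 0 then ((Ring.choose n k : ℤ) : ZMod p) else 0 := by
    rintro ⟨i, j⟩ hij
    rw [Finset.HasAntidiagonal.mem_antidiagonal] at hij
    by_cases hj : j = 0
    · simp [hj, ← hij, Ring.choose_zero_right]
    · have hjk : j ≤ k := by omega
      have hjp : p ∣ Nat.choose (p ^ N) j :=
        Nat.Prime.dvd_choose_pow hp hj (by omega)
      have : Ring.choose ((p : ℤ) ^ N) j = (Nat.choose (p ^ N) j : ℤ) := by
        rw [← Nat.cast_pow, Ring.choose_natCast]
      rw [if_neg hj, Int.cast_mul, this]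
      have : ((Nat.choose (p ^ N) j : ℤ) : ZMod p) = 0 := by
        rw [Int.cast_natCast, ZMod.natCast_eq_zero_iff _ _ |>.mpr hjp]
      rw [this, mul_zero]
  rw [Int.cast_sum, Finset.sum_congr rfl this]
  have h2 : (∑ x ∈ Finset.HasAntidiagonal.antidiagonal k, if x.2 = 0 then ((Ring.choose n k : ℤ) : ZMod p) else 0)
      = ∑ x ∈ Finset.HasAntidiagonal.antidiagonal k, if x = (k, 0) then ((Ring.choose n k : ℤ) : ZMod p) else 0 := by
    refine Finset.sum_congr rfl fun x hx => if_congr ?_ rfl rfl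
    rw [Finset.HasAntidiagonal.mem_antidiagonal] at hx
    constructor
    · intro h; ext <;> simp_all
    · intro h; rw [h]
  rw [h2, Finset.sum_ite_eq' _ (k, 0)]
  simp

lemma choose_shift_cast (p : ℕ) (hp : p.Prime) (n : ℤ) (k N : ℕ) (hk : k < p ^ N) (c : ℤ) :
    ((Ring.choose (n + c * (p : ℤ) ^ N) k : ℤ) : ZMod p) = ((Ring.choose n k : ℤ) : ZMod p) := by
  induction c using Int.induction_on with
  | zero => simp
  | succ c ih =>
    have := choose_add_pow_cast p hp (n + c * (p : ℤ) ^ N) k N hk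
    rw [← ih, ← this]; ring_nf
  | pred c ih =>
    have := choose_add_pow_cast p hp (n + (-c - 1) * (p : ℤ) ^ N) k N hk
    rw [← ih, ← this]; ring_nf

lemma nat_case (p : ℕ) (hp : p.Prime) (n b : ℕ) :
    ((Nat.choose (p * n) (p * b) : ℤ) : ZMod p) = ((Nat.choose n b : ℤ) : ZMod p) := by
  haveI : Fact p.Prime := ⟨hp⟩
  have := @Choose.choose_modEq_choose_mod_mul_choose_div (p * n) (p * b) p ⟨hp⟩
  have hp0 : 0 < p := hp.pos
  rw [Int.ModEq] at this
  have h : (((p * n).choose (p * b) : ℤ) : ZMod p)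
      = ((((p * n % p).choose (p * b % p) * ((p * n / p).choose (p * b / p)) : ℕ) : ℤ) : ZMod p) := by
    rw [ZMod.intCast_eq_intCast_iff, Nat.cast_mul]
    exact this
  rw [h]
  simp [Nat.mul_mod_right, Nat.mul_div_cancel_left _ hp0]

theorem stmt2 (p : ℕ) (hp : p.Prime) (a : ℤ) (b : ℕ) (m : ℤ) :
    ((Ring.choose (a * ((p : ℤ) * m)) (p * b) : ℤ) : ZMod p) =
      ((Ring.choose (a * m) b : ℤ) : ZMod p) := by
  obtain ⟨N, hN⟩ : ∃ N, p * b < p ^ N ∧ b < p ^ N := by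
    obtain ⟨N, hN⟩ := pow_unbounded_of_one_lt (p * b + b + 1) (hp.one_lt)
    exact ⟨N, by omega, by omega⟩
  set c : ℤ := a.sign * (|m| + 1) with hc
  set m' : ℤ := m + c * (p : ℤ) ^ N with hm'
  have key1 : ((Ring.choose (a * ((p : ℤ) * m')) (p * b) : ℤ) : ZMod p)
      = ((Ring.choose (a * ((p : ℤ) * m)) (p * b) : ℤ) : ZMod p) := by
    have := choose_shift_cast p hp (a * ((p : ℤ) * m)) (p * b) (N + 1) (by
      have : p ^ N ≤ p ^ (N+1) := Nat.pow_le_pow_right hp.pos (by omega)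
      omega) (a * c)
    rw [← this, hm']; ring_nf
  have key2 : ((Ring.choose (a * m') b : ℤ) : ZMod p)
      = ((Ring.choose (a * m) b : ℤ) : ZMod p) := by
    have := choose_shift_cast p hp (a * m) b N hN.2 (a * c)
    rw [← this, hm']; ring_nf
  rw [← key1, ← key2]
  -- now a * m' ≥ 0
  have hpN : (1 : ℤ) ≤ (p : ℤ) ^ N := one_le_pow₀ (by exact_mod_cast hp.one_lt.le)
  have ham' : 0 ≤ a * m' := by
    rcases lt_trichotomy a 0 with h | h | h
    · have hs : a.sign = -1 := Int.sign_eq_neg_one_of_neg h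
      have : m' ≤ 0 := by
        rw [hm', hc, hs]
        nlinarith [abs_nonneg m, neg_abs_le m, le_abs_self m]
      nlinarith
    · simp [h]
    · have hs : a.sign = 1 := Int.sign_eq_one_of_pos h
      have : 0 ≤ m' := by
        rw [hm', hc, hs]
        nlinarith [abs_nonneg m, neg_abs_le m, le_abs_self m]
      exact mul_nonneg h.le this
  obtain ⟨n, hn⟩ : ∃ n : ℕ, a * m' = (n : ℤ) := ⟨(a * m').toNat, (Int.toNat_of_nonneg ham').symm⟩
  have h1 : a * ((p : ℤ) * m') = ((p * n : ℕ) : ℤ) := by push_cast; rw [← mul_assoc, mul_comm a, mul_assoc, hn]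
  rw [h1, hn, Ring.choose_natCast, Ring.choose_natCast]
  exact nat_case p hp n b
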